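/- Every subword-closed language over a finite alphabet is regular: if Σ is a finite alphabet and L ⊆ Σ* is a subword-closed language, then L is a regular language (accepted by a deterministic finite automaton with finitely many states). -/

import Mathlib

open Set

/-- Sublist version of Higman's lemma in monotone-subsequence form. -/
lemma higman_mono_subseq {A : Type} [Fintype A] (f : ℕ → List A) :
    ∃ g : ℕ ↪o ℕ, ∀ m n : ℕ, m ≤ n → (f (g m)).Sublist (f (g n)) := by
  have hpwo : (Set.univ : Set A).PartiallyWellOrderedOn (· = ·) :=
    Set.finite_univ.partiallyWellOrderedOn
  have h := hpwo.partiallyWellOrderedOn_sublistForall₂ (· = ·)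
  haveI : IsPreorder (List A) (List.SublistForall₂ (fun x1 x2 : A => x1 = x2)) :=
    { refl := (List.SublistForall₂.is_refl (Rₐ := fun x1 x2 : A => x1 = x2)).refl
      trans := (List.SublistForall₂.is_trans (Rₐ := fun x1 x2 : A => x1 = x2)).trans }
  obtain ⟨g, hg⟩ := h.exists_monotone_subseq (f := f) (fun n x _ => Set.mem_univ x)
  refine ⟨g, fun m n hmn => ?_⟩
  have h2 := hg m n hmn
  rw [List.sublistForall₂_iff] at h2
  obtain ⟨l, hl1, hl2⟩ := h2
  have : f (g m) = l := by
    rw [← List.forall₂_eq_eq_eq (α := A)]; exact hl1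
  rwa [this]

/-- Higman's lemma: some earlier term is a sublist of a later term. -/
lemma higman_pair {A : Type} [Fintype A] (f : ℕ → List A) :
    ∃ m n : ℕ, m < n ∧ (f m).Sublist (f n) := by
  obtain ⟨g, hg⟩ := higman_mono_subseq f
  exact ⟨g 0, g 1, g.strictMono (by norm_num), hg 0 1 (by norm_num)⟩

/-- Every subword-closed language over a finite alphabet is regular. -/
theorem subword_closed_is_regular
    {A : Type} [Fintype A] (L : Language A)
    (hL : ∀ w ∈ L, ∀ v : List A, v.Sublist w → v ∈ L) :
    L.IsRegular := by
  classical
  -- the left quotient map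
  set Q : List A → Language A := fun w => {v | w ++ v ∈ L} with hQ
  -- each quotient is subword-closed
  have hQclosed : ∀ w : List A, ∀ v ∈ Q w, ∀ v' : List A, v'.Sublist v → v' ∈ Q w := by
    intro w v hv v' hv'
    exact hL (w ++ v) hv (w ++ v') ((List.Sublist.refl w).append hv')
  -- quotients are antitone in the subword order
  have hQanti : ∀ u w : List A, u.Sublist w → Q w ≤ Q u := by
    intro u w huw v hv
    exact hL (w ++ v) hv (u ++ v) (huw.append (List.Sublist.refl v))
  -- the set of quotients is finite
  have hfin : (Set.range Q).Finite := by
    by_contra hinf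
    set e := Set.Infinite.natEmbedding _ hinf with he
    set w : ℕ → List A := fun n => ((e n).2).choose with hw
    have hwQ : ∀ n, Q (w n) = (e n).1 := fun n => ((e n).2).choose_spec
    have hinj : Function.Injective fun n => Q (w n) := by
      intro m n hmn
      simp only [hwQ] at hmn
      exact e.injective (Subtype.ext hmn)
    obtain ⟨g, hg⟩ := higman_mono_subseq w
    set D : ℕ → Language A := fun n => Q (w (g n)) with hD
    have hchain : ∀ m n : ℕ, m ≤ n → D n ≤ D m := fun m n hmn =>
      hQanti _ _ (hg m n hmn)
    have hstrict : ∀ n : ℕ, ∃ x, x ∈ D n ∧ x ∉ D (n + 1) := by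
      intro n
      have hne : D (n + 1) ≠ D n := by
        intro h
        have := hinj h
        have := g.injective this
        omega
      have hsub : D (n + 1) ≤ D n := hchain n (n + 1) (Nat.le_succ n)
      by_contra hcon
      push_neg at hcon
      exact hne (le_antisymm hsub fun x hx => hcon x hx)
    choose x hx1 hx2 using hstrict
    obtain ⟨m, n, hmn, hsubl⟩ := higman_pair x
    have hxn : x n ∈ D (m + 1) := hchain (m + 1) n hmn (hx1 n)
    exact hx2 m (hQclosed _ _ hxn _ hsubl)
  -- build the DFA on the quotients
  haveI : Fintype ↥(Set.range Q) := hfin.fintype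
  set M : DFA A ↥(Set.range Q) :=
    { step := fun q a =>
        ⟨{v | a :: v ∈ q.1}, by
          obtain ⟨u, hu⟩ := q.2
          refine ⟨u ++ [a], ?_⟩
          ext v
          simp only [hQ, ← hu, Set.mem_setOf_eq, List.append_assoc,
            List.singleton_append]
          rfl⟩
      start := ⟨Q [], ⟨[], rfl⟩⟩
      accept := {q | [] ∈ q.1} } with hM
  refine ⟨↥(Set.range Q), inferInstance, M, ?_⟩
  have heval : ∀ (v : List A) (q : ↥(Set.range Q)),
      (M.evalFrom q v).1 = {x | v ++ x ∈ q.1} := by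
    intro v
    induction v with
    | nil => intro q; ext x; exact Iff.rfl
    | cons a v ih =>
      intro q
      have : M.evalFrom q (a :: v) = M.evalFrom (M.step q a) v := rfl
      rw [this, ih]
      ext x
      exact Iff.rfl
  ext x
  rw [DFA.mem_accepts]
  have hev : (M.eval x).1 = {y | x ++ y ∈ (M.start).1} := heval x M.start
  show M.eval x ∈ M.accept ↔ x ∈ L
  have hstart : (M.start).1 = L := by
    ext v; exact Iff.rfl
  constructor
  · intro h
    have h2 : [] ∈ (M.eval x).1 := h
    rw [hev, hstart] at h2
    have h3 : x ++ ([] : List A) ∈ L := h2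
    rwa [List.append_nil] at h3
  · intro h
    show [] ∈ (M.eval x).1
    rw [hev, hstart]
    show x ++ ([] : List A) ∈ L
    rwa [List.append_nil]
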